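/- arXiv:1706.09681 — 2 statements merged into one kernel-verified Lean document; each statement's English description precedes it below -/
import Mathlib

section
/- For λ ∈ ℝ, r a nonnegative integer, and every nonnegative integer n, the extended degenerate Bell number satisfies Bel^{(r)}_{n,λ} = Σ_{k=0}^{n} S_{2,r}(n+r, k+r | λ) = Σ_{k=0}^{n} Σ_{m=k}^{n} Σ_{l=0}^{n−m} C(n,m) r^l λ^{n−m−l} S_1(n−m, l) S_{2,λ}(m, k). -/
open Finset

/-- The degenerate falling factorial `(x|λ)_n = x(x-λ)(x-2λ)⋯(x-(n-1)λ)`. -/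
noncomputable def degFall (x lam : ℝ) (n : ℕ) : ℝ := ∏ i ∈ Finset.range n, (x - i * lam)

/-- The formal power series `(1+λt)^{y/λ} = Σ_{m=0}^∞ (y|λ)_m t^m/m!`. -/
noncomputable def degExp (lam y : ℝ) : PowerSeries ℝ :=
  PowerSeries.mk fun m => degFall y lam m / m.factorial

/-- The degenerate Stirling numbers of the second kind `S_{2,λ}(n,k)`, defined by
`(1/k!)((1+λt)^{1/λ} - 1)^k = Σ_{n=k}^∞ S_{2,λ}(n,k) t^n/n!`. -/
noncomputable def degStirling2 (lam : ℝ) (n k : ℕ) : ℝ :=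
  (n.factorial : ℝ) *
    PowerSeries.coeff n (((k.factorial : ℝ))⁻¹ • (degExp lam 1 - 1) ^ k)

/-- The extended degenerate Stirling numbers of the second kind `S_{2,r}(n+r,k+r|λ)`,
defined by `(1/k!)(1+λt)^{r/λ}((1+λt)^{1/λ} - 1)^k = Σ_{n=k}^∞ S_{2,r}(n+r,k+r|λ) t^n/n!`. -/
noncomputable def extDegStirling2 (lam : ℝ) (r n k : ℕ) : ℝ :=
  (n.factorial : ℝ) *
    PowerSeries.coeff n
      (((k.factorial : ℝ))⁻¹ • (degExp lam r * (degExp lam 1 - 1) ^ k))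

/-- The exponential `e^f = Σ_{k=0}^∞ f^k / k!` of a formal power series, computed
coefficientwise (the coefficientwise sums converge when `f` has zero constant term). -/
noncomputable def expComp (f : PowerSeries ℝ) : PowerSeries ℝ :=
  PowerSeries.mk fun n => ∑' k : ℕ, PowerSeries.coeff n (f ^ k) / k.factorial

/-- The degenerate Bell polynomials, defined by
`e^{x((1+λt)^{1/λ} - 1)} = Σ_{n=0}^∞ Bel_{n,λ}(x) t^n/n!`. -/
noncomputable def degBell (lam x : ℝ) (n : ℕ) : ℝ :=
  (n.factorial : ℝ) * PowerSeries.coeff n (expComp (x • (degExp lam 1 - 1)))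

/-- The extended degenerate Bell polynomials, defined by
`(1+λt)^{r/λ} e^{x((1+λt)^{1/λ} - 1)} = Σ_{n=0}^∞ Bel^{(r)}_{n,λ}(x) t^n/n!`. -/
noncomputable def extDegBell (lam : ℝ) (r : ℕ) (x : ℝ) (n : ℕ) : ℝ :=
  (n.factorial : ℝ) *
    PowerSeries.coeff n (degExp lam r * expComp (x • (degExp lam 1 - 1)))

/-- The signed Stirling numbers of the first kind `S_1(n,k)`, defined by
`(x)_n = x(x-1)⋯(x-n+1) = Σ_{k=0}^n S_1(n,k) x^k`. -/
noncomputable def stirling1 (n k : ℕ) : ℝ :=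
  (∏ i ∈ Finset.range n, (Polynomial.X - Polynomial.C (i : ℝ))).coeff k

/-- The Stirling numbers of the second kind, defined by
`(1/k!)(e^t - 1)^k = Σ_{n=k}^∞ S_2(n,k) t^n/n!`. -/
noncomputable def stirling2 (n k : ℕ) : ℝ :=
  (n.factorial : ℝ) *
    PowerSeries.coeff n (((k.factorial : ℝ))⁻¹ • (PowerSeries.exp ℝ - 1) ^ k)

/-- The r-Stirling numbers of the second kind `S_{2,r}(n+r,k+r)`, defined by
`e^{rt}(1/k!)(e^t - 1)^k = Σ_{n=0}^∞ S_{2,r}(n+r,k+r) t^n/n!`. -/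
noncomputable def rStirling2 (r n k : ℕ) : ℝ :=
  (n.factorial : ℝ) *
    PowerSeries.coeff n
      (PowerSeries.rescale (r : ℝ) (PowerSeries.exp ℝ) *
        ((k.factorial : ℝ))⁻¹ • (PowerSeries.exp ℝ - 1) ^ k)

/-- The ordinary falling factorial `(x)_k = x(x-1)⋯(x-k+1)`. -/
noncomputable def fallFact (x : ℝ) (k : ℕ) : ℝ := ∏ i ∈ Finset.range k, (x - i)

lemma stirling1_top_zero (j : ℕ) : stirling1 j (j + 1) = 0 := by
  apply Polynomial.coeff_eq_zero_of_natDegree_lt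
  have : (∏ i ∈ Finset.range j, (Polynomial.X - Polynomial.C (i : ℝ))).natDegree = j := by
    rw [Polynomial.natDegree_prod_of_monic _ _ (fun i _ => Polynomial.monic_X_sub_C _)]
    simp only [Polynomial.natDegree_X_sub_C]
    simp
  omega

lemma degFall_eq_sum (x lam : ℝ) (j : ℕ) :
    degFall x lam j = ∑ l ∈ Finset.range (j + 1), stirling1 j l * x ^ l * lam ^ (j - l) := by
  induction j with
  | zero => simp [degFall, stirling1]
  | succ j ih =>
    have hs1 : ∀ l, stirling1 (j+1) (l+1) = stirling1 j l - stirling1 j (l+1) * j := by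
      intro l
      simp only [stirling1, Finset.prod_range_succ]
      exact Polynomial.coeff_mul_X_sub_C
    have hs0 : stirling1 (j+1) 0 = stirling1 j 0 * (-(j:ℝ)) := by
      simp only [stirling1, Finset.prod_range_succ, Polynomial.mul_coeff_zero]
      simp
    have key : ∑ l ∈ range (j+1), stirling1 j l * x ^ l * lam ^ (j + 1 - l)
        = (∑ l ∈ range (j+1), stirling1 j l * x ^ l * lam ^ (j - l)) * lam := by
      rw [Finset.sum_mul]
      refine Finset.sum_congr rfl fun l hl => ?_
      have hl' : l ≤ j := by simpa [Nat.lt_succ_iff] using hl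
      have : j + 1 - l = (j - l) + 1 := by omega
      rw [this, pow_succ]; ring
    have shift : ∑ l ∈ range (j+1), stirling1 j (l+1) * x ^ (l+1) * lam ^ (j - l)
          + stirling1 j 0 * x ^ 0 * lam ^ (j + 1)
        = ∑ l ∈ range (j+1), stirling1 j l * x ^ l * lam ^ (j + 1 - l) := by
      have h1 := Finset.sum_range_succ' (fun l => stirling1 j l * x ^ l * lam ^ (j + 1 - l)) (j+1)
      have h2 : ∑ l ∈ range (j+2), stirling1 j l * x ^ l * lam ^ (j + 1 - l)
          = ∑ l ∈ range (j+1), stirling1 j l * x ^ l * lam ^ (j + 1 - l) := by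
        rw [Finset.sum_range_succ, stirling1_top_zero]; ring
      rw [← h2, h1, Nat.sub_zero]
      simp only [Nat.succ_sub_succ]
    have hB : ∑ l ∈ range (j+1), stirling1 j l * x ^ (l+1) * lam ^ (j - l)
        = (∑ l ∈ range (j+1), stirling1 j l * x ^ l * lam ^ (j - l)) * x := by
      rw [Finset.sum_mul]
      exact Finset.sum_congr rfl fun l hl => by rw [pow_succ]; ring
    rw [degFall, Finset.prod_range_succ, ← degFall, ih]
    rw [Finset.sum_range_succ' (fun l => stirling1 (j+1) l * x ^ l * lam ^ (j + 1 - l)) (j+1)]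
    have hexp : ∀ l ∈ range (j+1), stirling1 (j+1) (l+1) * x ^ (l+1) * lam ^ (j + 1 - (l+1))
        = stirling1 j l * x ^ (l+1) * lam ^ (j - l)
          - (j:ℝ) * (stirling1 j (l+1) * x ^ (l+1) * lam ^ (j - l)) := by
      intro l hl
      rw [hs1]
      have : j + 1 - (l + 1) = j - l := by omega
      rw [this]; ring
    rw [Finset.sum_congr rfl hexp, Finset.sum_sub_distrib, ← Finset.mul_sum, hs0, Nat.sub_zero]
    linear_combination -hB + (j:ℝ) * shift + (j:ℝ) * key

lemma coeff_pow_zero {f : PowerSeries ℝ} (hf : PowerSeries.constantCoeff f = 0)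
    {j k : ℕ} (h : j < k) : PowerSeries.coeff j (f ^ k) = 0 := by
  obtain ⟨g, rfl⟩ := PowerSeries.X_dvd_iff.mpr hf
  rw [mul_pow, PowerSeries.coeff_X_pow_mul', if_neg (by omega)]

lemma constCoeff_degExp_sub_one (lam : ℝ) :
    PowerSeries.constantCoeff (degExp lam 1 - 1) = 0 := by
  simp [degExp, degFall, ← PowerSeries.coeff_zero_eq_constantCoeff]

lemma coeff_mul_expComp (g f : PowerSeries ℝ) (hf : PowerSeries.constantCoeff f = 0) (n : ℕ) :
    PowerSeries.coeff n (g * expComp f) =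
      ∑ k ∈ range (n + 1), PowerSeries.coeff n (g * f ^ k) / k.factorial := by
  rw [PowerSeries.coeff_mul]
  have step : ∀ p ∈ antidiagonal n,
      PowerSeries.coeff p.1 g * PowerSeries.coeff p.2 (expComp f)
      = ∑ k ∈ range (n+1),
          PowerSeries.coeff p.1 g * PowerSeries.coeff p.2 (f ^ k) / k.factorial := by
    intro p hp
    have hp2 : p.2 ≤ n := by
      have := Finset.HasAntidiagonal.mem_antidiagonal.mp hp; omega
    rw [expComp, PowerSeries.coeff_mk]
    rw [tsum_eq_sum (s := range (n+1)) (fun k hk => by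
      have : p.2 < k := by
        simp only [Finset.mem_range, not_lt] at hk; omega
      rw [coeff_pow_zero hf this, zero_div])]
    rw [Finset.mul_sum]
    exact Finset.sum_congr rfl fun k _ => by ring
  rw [Finset.sum_congr rfl step, Finset.sum_comm]
  refine Finset.sum_congr rfl fun k _ => ?_
  rw [PowerSeries.coeff_mul, Finset.sum_div]

lemma degStirling2_eq_zero (lam : ℝ) {m k : ℕ} (h : m < k) : degStirling2 lam m k = 0 := by
  rw [degStirling2, map_smul, smul_eq_mul, coeff_pow_zero (constCoeff_degExp_sub_one lam) h]
  ring

lemma extDegStirling2_eq_sum (lam : ℝ) (r n k : ℕ) :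
    extDegStirling2 lam r n k =
      ∑ m ∈ range (n + 1), (n.choose m : ℝ) * degFall r lam (n - m) * degStirling2 lam m k := by
  rw [extDegStirling2, map_smul, smul_eq_mul, PowerSeries.coeff_mul,
    Finset.Nat.sum_antidiagonal_eq_sum_range_succ_mk, ← Finset.sum_range_reflect,
    Finset.mul_sum, Finset.mul_sum]
  refine Finset.sum_congr rfl fun m hm => ?_
  have hm' : m ≤ n := by simpa [Nat.lt_succ_iff] using hm
  have e1 : n + 1 - 1 - m = n - m := by omega
  have e2 : n - (n - m) = m := by omega
  rw [e1, e2, degExp, PowerSeries.coeff_mk, degStirling2, map_smul, smul_eq_mul]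
  have hfac : ((n.choose m : ℝ)) * m.factorial * (n - m).factorial = n.factorial := by
    exact_mod_cast Nat.choose_mul_factorial_mul_factorial hm'
  have h1 : ((n - m).factorial : ℝ) ≠ 0 := Nat.cast_ne_zero.mpr (Nat.factorial_ne_zero _)
  have hfac' : (n.factorial : ℝ) * (((n - m).factorial : ℝ))⁻¹
      = (n.choose m : ℝ) * (m.factorial : ℝ) := by
    field_simp
    linear_combination -hfac
  rw [div_eq_mul_inv]
  linear_combination (((k.factorial : ℝ))⁻¹ * degFall (r:ℝ) lam (n-m) *
    PowerSeries.coeff m ((degExp lam 1 - 1) ^ k)) * hfac'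

theorem extDegBell_number_eq (lam : ℝ) (r : ℕ) (n : ℕ) :
    extDegBell lam r 1 n = ∑ k ∈ Finset.range (n + 1), extDegStirling2 lam r n k ∧
    extDegBell lam r 1 n =
      ∑ k ∈ Finset.range (n + 1), ∑ m ∈ Finset.Icc k n, ∑ l ∈ Finset.range (n - m + 1),
        (n.choose m : ℝ) * (r : ℝ) ^ l * lam ^ (n - m - l) * stirling1 (n - m) l *
          degStirling2 lam m k := by
  have hconst := constCoeff_degExp_sub_one lam
  have h1 : extDegBell lam r 1 n = ∑ k ∈ Finset.range (n + 1), extDegStirling2 lam r n k := by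
    rw [extDegBell, one_smul, coeff_mul_expComp _ _ hconst, Finset.mul_sum]
    refine Finset.sum_congr rfl fun k _ => ?_
    rw [extDegStirling2, map_smul, smul_eq_mul]
    ring
  refine ⟨h1, h1.trans (Finset.sum_congr rfl fun k _ => ?_)⟩
  rw [extDegStirling2_eq_sum]
  have inner : ∀ m ∈ Finset.Icc k n,
      ∑ l ∈ Finset.range (n - m + 1),
        (n.choose m : ℝ) * (r : ℝ) ^ l * lam ^ (n - m - l) * stirling1 (n - m) l *
          degStirling2 lam m k
      = (n.choose m : ℝ) * degFall r lam (n - m) * degStirling2 lam m k := by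
    intro m _
    rw [degFall_eq_sum, Finset.mul_sum, Finset.sum_mul]
    exact Finset.sum_congr rfl fun l _ => by ring
  rw [Finset.sum_congr rfl inner]
  symm
  apply Finset.sum_subset
  · intro m hm
    simp only [Finset.mem_Icc] at hm
    simp only [Finset.mem_range]
    omega
  · intro m hm1 hm2
    simp only [Finset.mem_range] at hm1
    simp only [Finset.mem_Icc] at hm2
    have : m < k := by omega
    rw [degStirling2_eq_zero lam this, mul_zero]
end

section
/- (Theorem 2.4, main case) For λ ∈ ℝ, r a nonnegative integer, and nonnegative integers n, k with n ≥ k, one has (1/k!) Σ_{m=0}^{n} λ^{n−m} S_1(n,m) Δ^k r^m = S_{2,r}(n+r, k+r | λ), where Δ^k r^m = Σ_{l=0}^{k} C(k,l) (−1)^{k−l} (l+r)^m. -/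
open Finset

lemma degFall_succ' (x lam : ℝ) (n : ℕ) :
    degFall x lam (n + 1) = degFall x lam n * (x - n * lam) := by
  simp [degFall, Finset.prod_range_succ]

lemma degFall_add (lam a b : ℝ) (n : ℕ) :
    degFall (a + b) lam n
      = ∑ j ∈ Finset.range (n + 1),
          (n.choose j : ℝ) * degFall a lam j * degFall b lam (n - j) := by
  induction n with
  | zero => simp [degFall]
  | succ n ih =>
    have key : ∑ j ∈ Finset.range (n + 2),
        ((n + 1).choose j : ℝ) * degFall a lam j * degFall b lam (n + 1 - j)
        = (∑ j ∈ Finset.range (n + 1),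
            (n.choose j : ℝ) * degFall a lam j * degFall b lam (n - j)) * (a + b - n * lam) := by
      rw [Finset.sum_range_succ']
      have h1 : ∀ j ∈ Finset.range (n + 1),
          (((n + 1).choose (j + 1) : ℕ) : ℝ) * degFall a lam (j + 1) * degFall b lam (n + 1 - (j + 1))
          = (n.choose j : ℝ) * degFall a lam (j + 1) * degFall b lam (n - j)
            + (n.choose (j + 1) : ℝ) * degFall a lam (j + 1) * degFall b lam (n - j) := by
        intro j hj
        have e : n + 1 - (j + 1) = n - j := by omega
        rw [e, Nat.choose_succ_succ]
        push_cast
        simp only [Nat.succ_eq_add_one]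
        ring
      rw [Finset.sum_congr rfl h1, Finset.sum_add_distrib]
      have h2 : (∑ j ∈ Finset.range (n + 1),
            (n.choose (j + 1) : ℝ) * degFall a lam (j + 1) * degFall b lam (n - j))
          + ((n + 1).choose 0 : ℝ) * degFall a lam 0 * degFall b lam (n + 1 - 0)
          = ∑ j ∈ Finset.range (n + 1),
            (n.choose j : ℝ) * degFall a lam j * degFall b lam (n - j) * (b - (n - j : ℕ) * lam) := by
        have step : (∑ j ∈ Finset.range (n + 1),
              (n.choose (j + 1) : ℝ) * degFall a lam (j + 1) * degFall b lam (n - j))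
            + ((n + 1).choose 0 : ℝ) * degFall a lam 0 * degFall b lam (n + 1 - 0)
            = ∑ j ∈ Finset.range (n + 2),
              (n.choose j : ℝ) * degFall a lam j * degFall b lam (n + 1 - j) := by
          rw [Finset.sum_range_succ'
            (fun j => (n.choose j : ℝ) * degFall a lam j * degFall b lam (n + 1 - j)) (n + 1)]
          congr 1
          · refine Finset.sum_congr rfl fun j hj => ?_
            have e : n + 1 - (j + 1) = n - j := by omega
            simp only [e]
          · simp
        rw [step, Finset.sum_range_succ]
        simp only [Nat.choose_succ_self, Nat.cast_zero, zero_mul]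
        rw [add_zero]
        refine Finset.sum_congr rfl fun j hj => ?_
        have hjn : j ≤ n := Nat.lt_succ_iff.mp (Finset.mem_range.mp hj)
        have e : n + 1 - j = (n - j) + 1 := by omega
        rw [e, degFall_succ']
        ring
      rw [add_assoc, h2]
      have h3 : ∀ j ∈ Finset.range (n + 1),
          (n.choose j : ℝ) * degFall a lam (j + 1) * degFall b lam (n - j)
          = (n.choose j : ℝ) * degFall a lam j * degFall b lam (n - j) * (a - j * lam) := by
        intro j hj; rw [degFall_succ']; ring
      rw [Finset.sum_congr rfl h3, ← Finset.sum_add_distrib, Finset.sum_mul]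
      refine Finset.sum_congr rfl fun j hj => ?_
      have hjn : j ≤ n := Nat.lt_succ_iff.mp (Finset.mem_range.mp hj)
      rw [Nat.cast_sub hjn]
      ring
    rw [key, degFall_succ', ih]

lemma degExp_mul (lam a b : ℝ) : degExp lam a * degExp lam b = degExp lam (a + b) := by
  ext n
  rw [PowerSeries.coeff_mul, Finset.Nat.sum_antidiagonal_eq_sum_range_succ_mk]
  simp only [degExp, PowerSeries.coeff_mk]
  rw [degFall_add, Finset.sum_div]
  refine Finset.sum_congr rfl fun j hj => ?_
  have hjn : j ≤ n := Nat.lt_succ_iff.mp (Finset.mem_range.mp hj)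
  rw [Nat.cast_choose ℝ hjn]
  have h1 : (j.factorial : ℝ) ≠ 0 := Nat.cast_ne_zero.mpr j.factorial_ne_zero
  have h2 : ((n - j).factorial : ℝ) ≠ 0 := Nat.cast_ne_zero.mpr (n - j).factorial_ne_zero
  have h3 : (n.factorial : ℝ) ≠ 0 := Nat.cast_ne_zero.mpr n.factorial_ne_zero
  field_simp

lemma degExp_zero (lam : ℝ) : degExp lam 0 = 1 := by
  ext m
  simp only [degExp, PowerSeries.coeff_mk, PowerSeries.coeff_one]
  cases m with
  | zero => simp [degFall]
  | succ m =>
    have hz : degFall 0 lam (m + 1) = 0 := by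
      apply Finset.prod_eq_zero (Finset.mem_range.mpr (Nat.succ_pos m))
      simp
    simp [hz]

lemma degExp_one_pow (lam : ℝ) (l : ℕ) : degExp lam 1 ^ l = degExp lam l := by
  induction l with
  | zero => simpa using (degExp_zero lam).symm
  | succ l ih =>
    rw [pow_succ, ih, degExp_mul]
    congr 1
    push_cast
    ring

lemma natDegree_stirling1_poly (n : ℕ) :
    (∏ i ∈ Finset.range n, (Polynomial.X - Polynomial.C (i : ℝ))).natDegree = n := by
  rw [Polynomial.natDegree_prod _ _ (fun i _ => Polynomial.X_sub_C_ne_zero _)]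
  simp only [Polynomial.natDegree_X_sub_C]
  simp

lemma degFall_eq_sum_stirling1 (x lam : ℝ) (n : ℕ) :
    degFall x lam n = ∑ m ∈ Finset.range (n + 1), stirling1 n m * lam ^ (n - m) * x ^ m := by
  by_cases hlam : lam = 0
  · subst hlam
    have hx : degFall x 0 n = x ^ n := by simp [degFall]
    rw [hx, Finset.sum_eq_single_of_mem n (Finset.self_mem_range_succ n)]
    · have hmon : (∏ i ∈ Finset.range n, (Polynomial.X - Polynomial.C (i : ℝ))).Monic :=
        Polynomial.monic_prod_of_monic _ _ (fun i _ => Polynomial.monic_X_sub_C _)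
      have h1 : stirling1 n n = 1 := by
        have := hmon.coeff_natDegree
        rwa [natDegree_stirling1_poly] at this
      simp [h1]
    · intro m hm hmn
      have hlt : m < n := lt_of_le_of_ne (Nat.lt_succ_iff.mp (Finset.mem_range.mp hm)) hmn
      rw [zero_pow (by omega : n - m ≠ 0)]
      ring
  · have hP : Polynomial.eval (x / lam) (∏ i ∈ Finset.range n, (Polynomial.X - Polynomial.C (i : ℝ)))
        = ∑ m ∈ Finset.range (n + 1), stirling1 n m * (x / lam) ^ m := by
      conv_lhs => rw [Polynomial.eval_eq_sum_range]
      rw [natDegree_stirling1_poly]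
      rfl
    have heval : Polynomial.eval (x / lam) (∏ i ∈ Finset.range n, (Polynomial.X - Polynomial.C (i : ℝ)))
        = ∏ i ∈ Finset.range n, (x / lam - i) := by
      rw [Polynomial.eval_prod]
      simp
    have key : degFall x lam n = lam ^ n * ∏ i ∈ Finset.range n, (x / lam - i) := by
      rw [degFall,
        show lam ^ n * ∏ i ∈ Finset.range n, (x / lam - (i : ℝ))
          = ∏ i ∈ Finset.range n, (lam * (x / lam - i)) from by
            rw [Finset.prod_mul_distrib, Finset.prod_const, Finset.card_range]]
      refine Finset.prod_congr rfl fun i hi => ?_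
      field_simp
    rw [key, ← heval, hP, Finset.mul_sum]
    refine Finset.sum_congr rfl fun m hm => ?_
    have hmn : m ≤ n := Nat.lt_succ_iff.mp (Finset.mem_range.mp hm)
    rw [div_pow, pow_sub₀ lam hlam hmn]
    have hlm : lam ^ m ≠ 0 := pow_ne_zero _ hlam
    field_simp

theorem sum_stirling1_fwdDiff_eq_extDegStirling2 (lam : ℝ) (r n k : ℕ) (h : k ≤ n) :
    ((k.factorial : ℝ))⁻¹ *
      ∑ m ∈ Finset.range (n + 1), lam ^ (n - m) * stirling1 n m *
        (∑ l ∈ Finset.range (k + 1),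
          (k.choose l : ℝ) * (-1 : ℝ) ^ (k - l) * ((l : ℝ) + r) ^ m) =
      extDegStirling2 lam r n k := by
  have hexp : degExp lam r * (degExp lam 1 - 1) ^ k
      = ∑ l ∈ Finset.range (k + 1),
          PowerSeries.C ((-1 : ℝ) ^ (k - l) * (k.choose l)) * degExp lam ((l : ℝ) + r) := by
    rw [sub_eq_add_neg, add_pow, Finset.mul_sum]
    refine Finset.sum_congr rfl fun l hl => ?_
    rw [degExp_one_pow]
    have hneg : (-1 : PowerSeries ℝ) ^ (k - l) = PowerSeries.C ((-1 : ℝ) ^ (k - l)) := by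
      rw [show (-1 : PowerSeries ℝ) = PowerSeries.C (-1) from by simp, ← map_pow]
    have hch : ((k.choose l : ℕ) : PowerSeries ℝ) = PowerSeries.C ((k.choose l : ℕ) : ℝ) := by
      simp
    rw [hneg, hch, map_mul, ← degExp_mul]
    ring
  rw [extDegStirling2, hexp, map_smul, map_sum, smul_eq_mul]
  have hcoeff : ∀ l, PowerSeries.coeff n
      (PowerSeries.C ((-1 : ℝ) ^ (k - l) * (k.choose l)) * degExp lam ((l : ℝ) + r))
      = (-1 : ℝ) ^ (k - l) * (k.choose l) * (degFall ((l : ℝ) + r) lam n / n.factorial) := by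
    intro l
    rw [PowerSeries.coeff_C_mul]
    simp [degExp]
  simp only [hcoeff]
  have hn : (n.factorial : ℝ) ≠ 0 := Nat.cast_ne_zero.mpr n.factorial_ne_zero
  have hrhs : (n.factorial : ℝ) * ∑ l ∈ Finset.range (k + 1),
        (-1 : ℝ) ^ (k - l) * (k.choose l) * (degFall ((l : ℝ) + r) lam n / n.factorial)
      = ∑ l ∈ Finset.range (k + 1),
        (-1 : ℝ) ^ (k - l) * (k.choose l) * degFall ((l : ℝ) + r) lam n := by
    rw [Finset.mul_sum]
    refine Finset.sum_congr rfl fun l _ => ?_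
    field_simp
  rw [mul_left_comm, hrhs]
  congr 1
  have hswap : ∑ m ∈ Finset.range (n + 1), lam ^ (n - m) * stirling1 n m *
        (∑ l ∈ Finset.range (k + 1),
          (k.choose l : ℝ) * (-1 : ℝ) ^ (k - l) * ((l : ℝ) + r) ^ m)
      = ∑ l ∈ Finset.range (k + 1), ∑ m ∈ Finset.range (n + 1),
          (k.choose l : ℝ) * (-1 : ℝ) ^ (k - l)
            * (stirling1 n m * lam ^ (n - m) * ((l : ℝ) + r) ^ m) := by
    rw [Finset.sum_comm]
    refine Finset.sum_congr rfl fun m hm => ?_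
    rw [Finset.mul_sum]
    refine Finset.sum_congr rfl fun l hl => ?_
    ring
  rw [hswap]
  refine Finset.sum_congr rfl fun l hl => ?_
  rw [← Finset.mul_sum, ← degFall_eq_sum_stirling1]
  ring
end
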